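/- Let K > 0 and let η : ℝ → ℝ be twice differentiable on [0, K] with η(K) = 0, η'(k) ≤ 0 for all k ∈ [0, K] (non-increasing speed-density relation), and k·η''(k) + 2·η'(k) ≤ 0 for all k ∈ [0, K] (concave flow-density relation). Then for any Δt, ΔN > 0, the collision-free condition ΔN/Δt ≥ sup_{k∈[0,K)} k·η(k)/(1 − k/K) holds if and only if the CFL condition ΔN/Δt ≥ max_{k∈[0,K]} |−η'(k)·k²| holds; both are equivalent to ΔN/Δt ≥ −η'(K)·K². -/

import Mathlib

open Set Filter

lemma myAntitoneAux (K : ℝ) (f f' : ℝ → ℝ)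
    (hd : ∀ k ∈ Icc (0 : ℝ) K, HasDerivWithinAt f (f' k) (Icc (0 : ℝ) K) k)
    (hle : ∀ k ∈ Icc (0 : ℝ) K, f' k ≤ 0) : AntitoneOn f (Icc (0 : ℝ) K) := by
  apply antitoneOn_of_deriv_nonpos (convex_Icc _ _)
  · exact fun x hx => (hd x hx).continuousWithinAt
  · intro x hx
    rw [interior_Icc] at hx
    exact ((hd x (Ioo_subset_Icc_self hx)).differentiableWithinAt).mono interior_subset
  · intro x hx
    rw [interior_Icc] at hx
    have hmem : Icc (0 : ℝ) K ∈ nhds x := Icc_mem_nhds hx.1 hx.2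
    have := ((hd x (Ioo_subset_Icc_self hx)).hasDerivAt hmem).deriv
    rw [this]
    exact hle x (Ioo_subset_Icc_self hx)

theorem collision_free_iff_cfl (K ΔN Δt : ℝ) (hK : 0 < K)
    (hΔN : 0 < ΔN) (hΔt : 0 < Δt) (η η' η'' : ℝ → ℝ)
    (hd1 : ∀ k ∈ Set.Icc (0 : ℝ) K, HasDerivWithinAt η (η' k) (Set.Icc (0 : ℝ) K) k)
    (hd2 : ∀ k ∈ Set.Icc (0 : ℝ) K, HasDerivWithinAt η' (η'' k) (Set.Icc (0 : ℝ) K) k)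
    (hηK : η K = 0)
    (hmono : ∀ k ∈ Set.Icc (0 : ℝ) K, η' k ≤ 0)
    (hconc : ∀ k ∈ Set.Icc (0 : ℝ) K, k * η'' k + 2 * η' k ≤ 0) :
    (ΔN / Δt ≥ sSup ((fun k => k * η k / (1 - k / K)) '' Set.Ico (0 : ℝ) K) ↔
      (∀ k ∈ Set.Icc (0 : ℝ) K, |(-(η' k) * k ^ 2)| ≤ ΔN / Δt)) ∧
    (ΔN / Δt ≥ sSup ((fun k => k * η k / (1 - k / K)) '' Set.Ico (0 : ℝ) K) ↔
      ΔN / Δt ≥ -η' K * K ^ 2) := by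
  have hKmem : K ∈ Icc (0 : ℝ) K := ⟨hK.le, le_refl K⟩
  set L : ℝ := -η' K * K ^ 2 with hLdef
  -- φ(k) = k η(k), with derivative p(k) = η(k) + k η'(k) on [0,K]
  set φ : ℝ → ℝ := fun k => k * η k with hφdef
  set p : ℝ → ℝ := fun k => η k + k * η' k with hpdef
  have hφd : ∀ k ∈ Icc (0 : ℝ) K, HasDerivWithinAt φ (p k) (Icc (0 : ℝ) K) k := by
    intro k hk
    have := (hasDerivWithinAt_id k (Icc (0:ℝ) K)).mul (hd1 k hk)
    simpa [hpdef, hφdef, Pi.mul_def, id_eq] using this.congr_deriv (by simp only [id_eq]; ring)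
  -- p is antitone: p' = k η'' + 2 η' ≤ 0
  have hpd : ∀ k ∈ Icc (0 : ℝ) K,
      HasDerivWithinAt p (k * η'' k + 2 * η' k) (Icc (0 : ℝ) K) k := by
    intro k hk
    have := (hd1 k hk).add ((hasDerivWithinAt_id k (Icc (0:ℝ) K)).mul (hd2 k hk))
    simpa [hpdef, Pi.mul_def, Pi.add_def, id_eq] using this.congr_deriv (by simp only [id_eq]; ring)
  have hpanti : AntitoneOn p (Icc (0:ℝ) K) := myAntitoneAux K p _ hpd hconc
  -- g(k) = η'(k) k² is antitone
  have hganti : AntitoneOn (fun k => η' k * k ^ 2) (Icc (0:ℝ) K) := by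
    apply myAntitoneAux K _ (fun k => η'' k * k ^ 2 + η' k * (2 * k))
    · intro k hk
      have hp : HasDerivWithinAt (fun x : ℝ => x ^ 2) (2 * k) (Icc (0:ℝ) K) k := by
        simpa using (hasDerivAt_pow 2 k).hasDerivWithinAt
      exact (hd2 k hk).mul hp
    · intro k hk
      have h1 := hconc k hk
      nlinarith [hk.1]
  have hgK : ∀ k ∈ Icc (0 : ℝ) K, -(η' k) * k ^ 2 ≤ L := by
    intro k hk
    have h2 : η' K * K ^ 2 ≤ η' k * k ^ 2 := hganti hk hKmem hk.2
    simp only [hLdef]; linarith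
  -- the upper bound for the collision-free function
  have hub : ∀ k ∈ Ico (0 : ℝ) K, k * η k / (1 - k / K) ≤ L := by
    intro k hk
    have hkK : k < K := hk.2
    have hsub : Icc k K ⊆ Icc (0:ℝ) K := Icc_subset_Icc hk.1 (le_refl K)
    obtain ⟨c, hc, hcs⟩ := exists_hasDerivAt_eq_slope φ p hkK
      (fun x hx => (hφd x (hsub hx)).continuousWithinAt.mono hsub)
      (by
        intro x hx
        have hx' : x ∈ Ioo (0:ℝ) K := ⟨lt_of_le_of_lt hk.1 hx.1, hx.2⟩
        exact (hφd x (Ioo_subset_Icc_self hx')).hasDerivAt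
          (Icc_mem_nhds hx'.1 hx'.2))
    have hcmem : c ∈ Icc (0:ℝ) K :=
      ⟨le_trans hk.1 hc.1.le, hc.2.le⟩
    have hpc : p K ≤ p c := hpanti hcmem hKmem hc.2.le
    have hpK : p K = K * η' K := by simp [hpdef, hηK]
    have hφK : φ K = 0 := by simp [hφdef, hηK]
    rw [hcs, hφK] at hpc
    rw [hpK] at hpc
    -- K * η' K ≤ (0 - φ k) / (K - k)
    have hKk : (0:ℝ) < K - k := by linarith
    have h1 : K * η' K * (K - k) ≤ -φ k := by
      have := (le_div_iff₀ hKk).mp hpc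
      linarith
    have hden : (0:ℝ) < 1 - k / K := by
      rw [sub_pos, div_lt_one hK]; exact hkK
    rw [div_le_iff₀ hden]
    have : L * (1 - k / K) = -η' K * K * (K - k) := by
      field_simp [hLdef]; ring
    rw [this]
    have : k * η k = φ k := rfl
    rw [this]
    nlinarith [h1]
  -- sSup of the image equals L
  have hne : ((fun k => k * η k / (1 - k / K)) '' Ico (0 : ℝ) K).Nonempty :=
    ⟨_, mem_image_of_mem _ (⟨le_refl 0, hK⟩ : (0:ℝ) ∈ Ico (0:ℝ) K)⟩
  have hubS : ∀ x ∈ ((fun k => k * η k / (1 - k / K)) '' Ico (0 : ℝ) K), x ≤ L := by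
    rintro x ⟨k, hk, rfl⟩; exact hub k hk
  have hlub : IsLUB ((fun k => k * η k / (1 - k / K)) '' Ico (0 : ℝ) K) L := by
    constructor
    · exact hubS
    · intro b hb
      -- limit argument: f(k) → L as k → K⁻
      have hslope : Tendsto (slope φ K) (nhdsWithin K (Icc (0:ℝ) K \ {K}))
          (nhds (p K)) := by
        have := hφd K hKmem
        rw [hasDerivWithinAt_iff_tendsto_slope] at this
        exact this
      have hmono' : nhdsWithin K (Ico (0:ℝ) K) ≤ nhdsWithin K (Icc (0:ℝ) K \ {K}) := by
        apply nhdsWithin_mono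
        intro x hx
        exact ⟨⟨hx.1, hx.2.le⟩, fun h => absurd h (ne_of_lt hx.2)⟩
      have hT : Tendsto (fun k => k * η k / (1 - k / K)) (nhdsWithin K (Ico (0:ℝ) K))
          (nhds (-K * p K)) := by
        have h1 : Tendsto (fun x => -K * slope φ K x) (nhdsWithin K (Ico (0:ℝ) K))
            (nhds (-K * p K)) := (hslope.comp (by exact hmono'.trans le_rfl) |>.const_mul (-K))
        apply h1.congr'
        filter_upwards [self_mem_nhdsWithin] with x hx
        have hxK : x ≠ K := ne_of_lt hx.2
        have hφK : φ K = 0 := by simp [hφdef, hηK]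
        rw [slope_def_field, hφK, sub_zero]
        simp only [hφdef]
        have h2 : x - K ≠ 0 := sub_ne_zero.mpr hxK
        have h3 : 1 - x / K ≠ 0 := by
          have : x / K < 1 := (div_lt_one hK).mpr hx.2
          exact ne_of_gt (by linarith)
        have h4 : K - x ≠ 0 := fun h => hxK (by linarith)
        field_simp
        ring
      have hNB : (nhdsWithin K (Ico (0:ℝ) K)).NeBot := by
        rw [← mem_closure_iff_nhdsWithin_neBot, closure_Ico hK.ne]
        exact hKmem
      have hLval : -K * p K = L := by
        simp [hpdef, hηK, hLdef]; ring
      rw [← hLval]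
      refine le_of_tendsto hT ?_
      filter_upwards [self_mem_nhdsWithin] with x hx
      exact hb (mem_image_of_mem _ hx)
  have hsup : sSup ((fun k => k * η k / (1 - k / K)) '' Ico (0 : ℝ) K) = L :=
    hlub.csSup_eq hne
  rw [hsup]
  constructor
  · constructor
    · intro h k hk
      have h0 : 0 ≤ -(η' k) * k ^ 2 :=
        mul_nonneg (neg_nonneg.mpr (hmono k hk)) (sq_nonneg k)
      rw [abs_of_nonneg h0]
      exact le_trans (hgK k hk) h
    · intro h
      have := h K hKmem
      have h0 : 0 ≤ -(η' K) * K ^ 2 :=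
        mul_nonneg (neg_nonneg.mpr (hmono K hKmem)) (sq_nonneg K)
      rw [abs_of_nonneg h0] at this
      exact this
  · exact Iff.rfl
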